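/- Let D ⊆ ℝⁿ be unbounded with D_t := I_t ∩ D, and suppose the interior of D_{t₀} is nonempty for some t₀ ∈ ℝⁿ. Let K : ℝⁿ → [0, ∞) be measurable satisfying: (E1) sup_{t ∈ ℝⁿ} ∫_{I_t} K(t − η) dη < ∞; (E2) ∫_{I_t ∩ Dᶜ} K(t − η) dη → 0 as |t| → ∞ with t ∈ D; (E3) for every r > 0, ∫_{I_t ∩ D ∩ B(0,r)} K(t − η) dη → 0 as |t| → ∞ with t ∈ D. Let f = f_a + f₀, where f_a : ℝⁿ → X is bounded, continuous and R-multi-almost automorphic and f₀ ∈ C_{0,D}(ℝⁿ : X). Then Γf(t) := ∫_{D_t} K(t − η) f(η) dη defines a D-asymptotically R-multi-almost automorphic function from ℝⁿ to X. -/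

import Mathlib

open Filter Topology MeasureTheory
open scoped ENNReal NNReal

noncomputable section

/-- `f : ℝⁿ → X` is `R`-multi-almost automorphic. -/
def MultiAA1 {n : ℕ} {X : Type*} [NormedAddCommGroup X]
    (R : Set (ℕ → EuclideanSpace ℝ (Fin n))) (f : EuclideanSpace ℝ (Fin n) → X) : Prop :=
  Continuous f ∧
  ∀ b ∈ R, ∃ k : ℕ → ℕ, StrictMono k ∧ ∃ fs : EuclideanSpace ℝ (Fin n) → X,
    (∀ t, Tendsto (fun l => f (t + b (k l))) atTop (𝓝 (fs t))) ∧
    (∀ t, Tendsto (fun l => fs (t - b (k l))) atTop (𝓝 (f t)))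

/-- `I_t = (−∞, t₁] × ⋯ × (−∞, t_n]`. -/
def It {n : ℕ} (t : EuclideanSpace ℝ (Fin n)) : Set (EuclideanSpace ℝ (Fin n)) :=
  {η | ∀ i, η i ≤ t i}

/-- `f₀ ∈ C_{0,D}(ℝⁿ : X)`: continuous and `f₀(t) → 0` as `|t| → ∞` with `t ∈ D`. -/
def C0D1 {n : ℕ} {X : Type*} [NormedAddCommGroup X]
    (D : Set (EuclideanSpace ℝ (Fin n))) (f₀ : EuclideanSpace ℝ (Fin n) → X) : Prop :=
  Continuous f₀ ∧ ∀ ε > 0, ∃ r : ℝ, ∀ t ∈ D, r ≤ ‖t‖ → ‖f₀ t‖ < ε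

/-- `f` is `D`-asymptotically `R`-multi-almost automorphic. -/
def DAsympMultiAA1 {n : ℕ} {X : Type*} [NormedAddCommGroup X]
    (D : Set (EuclideanSpace ℝ (Fin n))) (R : Set (ℕ → EuclideanSpace ℝ (Fin n)))
    (f : EuclideanSpace ℝ (Fin n) → X) : Prop :=
  ∃ fa f₀ : EuclideanSpace ℝ (Fin n) → X,
    MultiAA1 R fa ∧ C0D1 D f₀ ∧ ∀ t, f t = fa t + f₀ t

section Helpers

variable {n : ℕ} {X : Type*} [NormedAddCommGroup X] [NormedSpace ℝ X] [CompleteSpace X]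

local notation "α" => EuclideanSpace ℝ (Fin n)

/-- The positive cone `[0,∞)ⁿ`. -/
def Qpos (n : ℕ) : Set (EuclideanSpace ℝ (Fin n)) := {s | ∀ i, 0 ≤ s i}

lemma measurableSet_It (t : α) : MeasurableSet (It t) := by
  have : It t = ⋂ i, {η : α | η i ≤ t i} := by ext η; simp [It, Set.mem_iInter]
  rw [this]
  exact MeasurableSet.iInter fun i => measurableSet_le (PiLp.continuous_apply 2 _ i).measurable measurable_const

lemma measurableSet_Qpos : MeasurableSet (Qpos n) := by
  have : Qpos n = ⋂ i, {η : α | 0 ≤ η i} := by ext η; simp [Qpos, Set.mem_iInter]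
  rw [this]
  exact MeasurableSet.iInter fun i => measurableSet_le measurable_const (PiLp.continuous_apply 2 _ i).measurable

lemma mem_It_iff_vol (t η : α) : η ∈ It t ↔ t - η ∈ Qpos n := by
  simp only [It, Qpos, Set.mem_setOf_eq, PiLp.sub_apply, sub_nonneg]

lemma integrable_smul_of_bound {β : Type*} [MeasurableSpace β] (ν : Measure β)
    (k : β → ℝ) (φ : β → X) (hk : Integrable k ν) (hφ : AEStronglyMeasurable φ ν) (M : ℝ)
    (hb : ∀ᵐ x ∂ν, ‖φ x‖ ≤ M) : Integrable (fun x => k x • φ x) ν := by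
  refine Integrable.mono' (hk.norm.const_mul M) (hk.aestronglyMeasurable.smul hφ) ?_
  filter_upwards [hb] with x hx
  rw [norm_smul]
  calc ‖k x‖ * ‖φ x‖ ≤ ‖k x‖ * M := mul_le_mul_of_nonneg_left hx (norm_nonneg _)
    _ = M * ‖k x‖ := mul_comm _ _

lemma norm_integral_smul_le {β : Type*} [MeasurableSpace β] (ν : Measure β)
    (k : β → ℝ) (hk : ∀ x, 0 ≤ k x) (φ : β → X) (M : ℝ) (hM : 0 ≤ M)
    (hb : ∀ᵐ x ∂ν, ‖φ x‖ ≤ M)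
    (hfin : (∫⁻ x, ENNReal.ofReal (k x) ∂ν) ≠ ∞) :
    ‖∫ x, k x • φ x ∂ν‖ ≤ M * (∫⁻ x, ENNReal.ofReal (k x) ∂ν).toReal := by
  refine le_trans (norm_integral_le_lintegral_norm _) ?_
  have h1 : (∫⁻ x, ENNReal.ofReal ‖k x • φ x‖ ∂ν)
      ≤ (∫⁻ x, ENNReal.ofReal (k x) ∂ν) * ENNReal.ofReal M := by
    rw [← lintegral_mul_const' (ENNReal.ofReal M) _ ENNReal.ofReal_ne_top]
    refine lintegral_mono_ae ?_
    filter_upwards [hb] with x hx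
    rw [norm_smul, Real.norm_eq_abs, abs_of_nonneg (hk x), ← ENNReal.ofReal_mul (hk x)]
    exact ENNReal.ofReal_le_ofReal (mul_le_mul_of_nonneg_left hx (hk x))
  calc (∫⁻ x, ENNReal.ofReal ‖k x • φ x‖ ∂ν).toReal
      ≤ ((∫⁻ x, ENNReal.ofReal (k x) ∂ν) * ENNReal.ofReal M).toReal :=
        ENNReal.toReal_mono (ENNReal.mul_ne_top hfin ENNReal.ofReal_ne_top) h1
    _ = M * (∫⁻ x, ENNReal.ofReal (k x) ∂ν).toReal := by
        rw [ENNReal.toReal_mul, ENNReal.toReal_ofReal hM, mul_comm]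

lemma fixed_form (K' : α → ℝ) (φ : α → X) (u : α) :
    ∫ η, K' (u - η) • φ η = ∫ s, K' s • φ (u - s) := by
  have h := integral_sub_left_eq_self (fun s => K' s • φ (u - s)) volume u
  simp only [sub_sub_cancel] at h
  exact h

lemma cont_aux (K' : α → ℝ) (hK'int : Integrable K' volume)
    (g : α → X) (hgm : AEStronglyMeasurable g volume) (M : ℝ)
    (hgb : ∀ x, ‖g x‖ ≤ M) :
    Continuous fun t : α => ∫ η, K' (t - η) • g η := by
  set μ : Measure α := volume with hμ
  set T : α → C(α, α) := fun t =>
    (ContinuousMap.curry ⟨fun p : α × α => p.1 - p.2, by fun_prop⟩) t with hT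
  have hTm : ∀ t : α, MeasurePreserving (T t) μ μ := fun t =>
    Measure.measurePreserving_sub_left μ t
  have hTcont : Continuous T := (ContinuousMap.curry _).continuous
  set K₁ : Lp ℝ 1 μ := hK'int.toL1 K' with hK₁
  set G : α → Lp ℝ 1 μ := fun t => Lp.compMeasurePreserving (T t) (hTm t) K₁ with hG
  have hGcont : Continuous G :=
    Continuous.compMeasurePreservingLp continuous_const hTcont hTm ENNReal.one_ne_top
  have hGcoe : ∀ t, (G t : α → ℝ) =ᵐ[μ] fun η => K' (t - η) := by
    intro t
    refine (Lp.coeFn_compMeasurePreserving K₁ (hTm t)).trans ?_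
    exact (hTm t).quasiMeasurePreserving.ae_eq_comp hK'int.coeFn_toL1
  have hKtint : ∀ t : α, Integrable (fun η => K' (t - η)) μ := fun t =>
    ((hTm t).integrable_comp hK'int.aestronglyMeasurable).mpr hK'int
  rw [continuous_iff_continuousAt]
  intro t₀
  have key : ∀ t, ‖(∫ η, K' (t - η) • g η ∂μ) - ∫ η, K' (t₀ - η) • g η ∂μ‖
      ≤ M * ‖G t - G t₀‖ := by
    intro t
    have hint1 : Integrable (fun η => K' (t - η) • g η) μ :=
      integrable_smul_of_bound μ _ _ (hKtint t) hgm M (Eventually.of_forall hgb)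
    have hint2 : Integrable (fun η => K' (t₀ - η) • g η) μ :=
      integrable_smul_of_bound μ _ _ (hKtint t₀) hgm M (Eventually.of_forall hgb)
    rw [← integral_sub hint1 hint2]
    have hnorm : ‖G t - G t₀‖ = ∫ η, ‖K' (t - η) - K' (t₀ - η)‖ ∂μ := by
      rw [L1.norm_eq_integral_norm]
      refine integral_congr_ae ?_
      filter_upwards [Lp.coeFn_sub (G t) (G t₀), hGcoe t, hGcoe t₀] with η h1 h2 h3
      rw [h1]; simp [Pi.sub_apply, h2, h3]
    rw [hnorm]
    have hbnd : ∀ η, ‖K' (t - η) • g η - K' (t₀ - η) • g η‖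
        ≤ M * ‖K' (t - η) - K' (t₀ - η)‖ := by
      intro η
      rw [← sub_smul, norm_smul]
      calc ‖K' (t - η) - K' (t₀ - η)‖ * ‖g η‖
          ≤ ‖K' (t - η) - K' (t₀ - η)‖ * M :=
            mul_le_mul_of_nonneg_left (hgb η) (norm_nonneg _)
        _ = M * ‖K' (t - η) - K' (t₀ - η)‖ := mul_comm _ _
    calc ‖∫ η, (K' (t - η) • g η - K' (t₀ - η) • g η) ∂μ‖
        ≤ ∫ η, M * ‖K' (t - η) - K' (t₀ - η)‖ ∂μ :=
          norm_integral_le_of_norm_le (((hKtint t).sub (hKtint t₀)).norm.const_mul M)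
            (Eventually.of_forall hbnd)
      _ = M * ∫ η, ‖K' (t - η) - K' (t₀ - η)‖ ∂μ := by rw [integral_const_mul]
  have hlim : Tendsto (fun t => M * ‖G t - G t₀‖) (𝓝 t₀) (𝓝 0) := by
    have h1 : Tendsto (fun t => ‖G t - G t₀‖) (𝓝 t₀) (𝓝 0) := by
      simpa using (tendsto_iff_norm_sub_tendsto_zero.mp (hGcont.tendsto t₀))
    simpa using h1.const_mul M
  rw [ContinuousAt, tendsto_iff_norm_sub_tendsto_zero]
  exact squeeze_zero (fun t => norm_nonneg _) key hlim

lemma multiAA_aux (R : Set (ℕ → EuclideanSpace ℝ (Fin n))) (K' : α → ℝ)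
    (hK'm : Measurable K') (hK'int : Integrable K' volume)
    (fa : α → X) (hfa : MultiAA1 R fa) (C : ℝ) (hC : ∀ t, ‖fa t‖ ≤ C) :
    MultiAA1 R (fun t => ∫ η, K' (t - η) • fa η) := by
  constructor
  · exact cont_aux K' hK'int fa hfa.1.aestronglyMeasurable C hC
  intro b hb
  obtain ⟨k, hk, fs, h1, h2⟩ := hfa.2 b hb
  have hfsm : StronglyMeasurable fs := by
    refine stronglyMeasurable_of_tendsto atTop
      (f := fun l (t : α) => fa (t + b (k l))) (fun l => ?_) (tendsto_pi_nhds.mpr h1)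
    exact (hfa.1.comp (continuous_id.add continuous_const)).stronglyMeasurable
  have hfsb : ∀ t, ‖fs t‖ ≤ C := fun t =>
    le_of_tendsto (h1 t).norm (Eventually.of_forall fun l => hC _)
  refine ⟨k, hk, fun u => ∫ s, K' s • fs (u - s), ?_, ?_⟩
  · intro t
    have heq : ∀ l, ∫ η, K' (t + b (k l) - η) • fa η = ∫ s, K' s • fa ((t - s) + b (k l)) := by
      intro l
      rw [fixed_form]
      congr 1; funext s; congr 2; abel
    simp only [heq]
    refine tendsto_integral_of_dominated_convergence (fun s => ‖K' s‖ * C)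
      (fun l => ?_) (hK'int.norm.mul_const C) (fun l => ?_) ?_
    · exact hK'm.aestronglyMeasurable.smul
        ((hfa.1.comp (by continuity)).aestronglyMeasurable)
    · refine Eventually.of_forall fun s => ?_
      rw [norm_smul]
      exact mul_le_mul_of_nonneg_left (hC _) (norm_nonneg _)
    · exact Eventually.of_forall fun s => (h1 (t - s)).const_smul (K' s)
  · intro t
    simp only []
    rw [show (∫ η, K' (t - η) • fa η) = ∫ s, K' s • fa (t - s) from fixed_form K' fa t]
    have heq : ∀ l, ∫ s, K' s • fs (t - b (k l) - s) = ∫ s, K' s • fs ((t - s) - b (k l)) := by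
      intro l; congr 1; funext s; congr 2; abel
    simp only [heq]
    refine tendsto_integral_of_dominated_convergence (fun s => ‖K' s‖ * C)
      (fun l => ?_) (hK'int.norm.mul_const C) (fun l => ?_) ?_
    · exact hK'm.aestronglyMeasurable.smul
        ((hfsm.comp_measurable
          ((measurable_const.sub measurable_id).sub measurable_const)).aestronglyMeasurable)
    · refine Eventually.of_forall fun s => ?_
      rw [norm_smul]
      exact mul_le_mul_of_nonneg_left (hfsb _) (norm_nonneg _)
    · exact Eventually.of_forall fun s => (h2 (t - s)).const_smul (K' s)

lemma aux_arith2 (a x : ℝ) (ha : 0 ≤ a) : (a + 1) * (x / (4 * (a + 1))) = x / 4 := by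
  have h : a + 1 ≠ 0 := by positivity
  field_simp

lemma aux_arith (a x : ℝ) (ha : 0 ≤ a) (hx : 0 < x) : a * (x / (4 * (a + 1))) ≤ x / 4 := by
  rw [mul_div_assoc', div_le_div_iff₀ (by positivity) (by norm_num)]
  nlinarith

end Helpers

set_option maxHeartbeats 1000000 in
theorem dAsympMultiAA1_volterra {n : ℕ} {X : Type*}
    [NormedAddCommGroup X] [NormedSpace ℝ X] [CompleteSpace X]
    (R : Set (ℕ → EuclideanSpace ℝ (Fin n))) (hR : R.Nonempty)
    (D : Set (EuclideanSpace ℝ (Fin n))) (hD : ¬ Bornology.IsBounded D)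
    (hint : ∃ t₀ : EuclideanSpace ℝ (Fin n), (interior (It t₀ ∩ D)).Nonempty)
    (K : EuclideanSpace ℝ (Fin n) → ℝ)
    (hKmeas : Measurable K) (hKpos : ∀ s, 0 ≤ K s)
    (hE1 : (⨆ t : EuclideanSpace ℝ (Fin n),
      ∫⁻ η in It t, ENNReal.ofReal (K (t - η))) < ⊤)
    (hE2 : ∀ ε > 0, ∃ r : ℝ, ∀ t ∈ D, r ≤ ‖t‖ →
      (∫⁻ η in It t ∩ Dᶜ, ENNReal.ofReal (K (t - η))) < ENNReal.ofReal ε)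
    (hE3 : ∀ ρ > 0, ∀ ε > 0, ∃ r : ℝ, ∀ t ∈ D, r ≤ ‖t‖ →
      (∫⁻ η in It t ∩ D ∩ Metric.ball (0 : EuclideanSpace ℝ (Fin n)) ρ,
        ENNReal.ofReal (K (t - η))) < ENNReal.ofReal ε)
    (f fa f₀ : EuclideanSpace ℝ (Fin n) → X)
    (hfa_bdd : ∃ C : ℝ, ∀ t, ‖fa t‖ ≤ C)
    (hfa : MultiAA1 R fa) (hf₀ : C0D1 D f₀)
    (hdec : ∀ t, f t = fa t + f₀ t) :
    DAsympMultiAA1 D R (fun t => ∫ η in It t ∩ D, K (t - η) • f η) := by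
  classical
  obtain ⟨C₀, hC₀⟩ := hfa_bdd
  set C := max C₀ 0 with hCdef
  have hC : ∀ t, ‖fa t‖ ≤ C := fun t => le_trans (hC₀ t) (le_max_left _ _)
  have hC0 : (0:ℝ) ≤ C := le_max_right _ _
  have hfc : Continuous f := by
    have hfe : f = fun t => fa t + f₀ t := funext hdec
    rw [hfe]; exact hfa.1.add hf₀.1
  -- bound for f₀ on D
  obtain ⟨r₀, hr₀⟩ := hf₀.2 1 one_pos
  obtain ⟨M₁, hM₁⟩ := (isCompact_closedBall (0 : EuclideanSpace ℝ (Fin n)) (max r₀ 0)).exists_bound_of_continuousOn hf₀.1.continuousOn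
  set MD := max M₁ 1 with hMDdef
  have hMD : ∀ x ∈ D, ‖f₀ x‖ ≤ MD := by
    intro x hx
    rcases le_or_gt r₀ ‖x‖ with h | h
    · exact le_trans (hr₀ x hx h).le (le_max_right _ _)
    · refine le_trans (hM₁ x ?_) (le_max_left _ _)
      rw [Metric.mem_closedBall, dist_zero_right]
      exact le_trans h.le (le_max_left _ _)
  have hMD0 : (0:ℝ) ≤ MD := le_trans zero_le_one (le_max_right _ _)
  set M' := C + MD with hM'def
  have hM'0 : (0:ℝ) ≤ M' := add_nonneg hC0 hMD0
  have hfD : ∀ x ∈ D, ‖f x‖ ≤ M' := fun x hx => by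
    rw [hdec x]; exact le_trans (norm_add_le _ _) (add_le_add (hC x) (hMD x hx))
  -- the truncated kernel
  set K' : EuclideanSpace ℝ (Fin n) → ℝ := (Qpos n).indicator K with hK'def
  have hK'm : Measurable K' := hKmeas.indicator measurableSet_Qpos
  have hK'0 : ∀ s, 0 ≤ K' s := fun s => Set.indicator_nonneg (fun y _ => hKpos y) s
  have hK'0t : ∀ (t η : EuclideanSpace ℝ (Fin n)), 0 ≤ K' (t - η) := fun t η => hK'0 _
  have hKid : ∀ (t η : EuclideanSpace ℝ (Fin n)), ENNReal.ofReal (K' (t - η))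
      = (It t).indicator (fun η => ENNReal.ofReal (K (t - η))) η := by
    intro t η
    by_cases h : η ∈ It t
    · rw [Set.indicator_of_mem h, hK'def, Set.indicator_of_mem ((mem_It_iff_vol t η).mp h)]
    · rw [Set.indicator_of_notMem h, hK'def,
        Set.indicator_of_notMem (fun hc => h ((mem_It_iff_vol t η).mpr hc)), ENNReal.ofReal_zero]
  set S := ⨆ t : EuclideanSpace ℝ (Fin n), ∫⁻ η in It t, ENNReal.ofReal (K (t - η)) with hSdef
  have hSne : S ≠ ⊤ := hE1.ne
  have hIle : ∀ t, (∫⁻ η in It t, ENNReal.ofReal (K (t - η))) ≤ S := fun t => le_iSup (fun t => ∫⁻ η in It t, ENNReal.ofReal (K (t - η))) t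
  have hlin : ∀ (t : EuclideanSpace ℝ (Fin n)) (ν : Measure (EuclideanSpace ℝ (Fin n))),
      (∫⁻ η, ENNReal.ofReal (K' (t - η)) ∂ν) = ∫⁻ η in It t, ENNReal.ofReal (K (t - η)) ∂ν := by
    intro t ν
    calc (∫⁻ η, ENNReal.ofReal (K' (t - η)) ∂ν)
        = ∫⁻ η, (It t).indicator (fun η => ENNReal.ofReal (K (t - η))) η ∂ν := by
          simp only [hKid]
      _ = ∫⁻ η in It t, ENNReal.ofReal (K (t - η)) ∂ν := lintegral_indicator (measurableSet_It t) _
  have hK'full : ∀ t : EuclideanSpace ℝ (Fin n),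
      (∫⁻ η, ENNReal.ofReal (K' (t - η))) = ∫⁻ x, ENNReal.ofReal (K' x) := fun t =>
    MeasurePreserving.lintegral_comp (Measure.measurePreserving_sub_left volume t)
      hK'm.ennreal_ofReal
  have hK'lin : (∫⁻ x, ENNReal.ofReal (K' x)) ≤ S := by
    rw [← hK'full 0, hlin 0]
    exact hIle 0
  have hK'int : Integrable K' volume := by
    refine ⟨hK'm.aestronglyMeasurable, ?_⟩
    rw [hasFiniteIntegral_iff_ofReal (Eventually.of_forall hK'0)]
    exact lt_of_le_of_lt hK'lin hE1
  have hKtfin : ∀ t, (∫⁻ η, ENNReal.ofReal (K' (t - η))) ≤ S := fun t => (hK'full t).le.trans hK'lin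
  have hKtint : ∀ t, Integrable (fun η => K' (t - η)) volume := fun t =>
    ((Measure.measurePreserving_sub_left volume t).integrable_comp
      hK'int.aestronglyMeasurable).mpr hK'int
  -- measurable hull of D
  set Em := toMeasurable volume D with hEdef
  have hEm : MeasurableSet Em := measurableSet_toMeasurable volume D
  have hDE : D ⊆ Em := subset_toMeasurable volume D
  have hrestr : volume.restrict Em = volume.restrict D :=
    Measure.restrict_toMeasurable_of_sFinite D
  have hnull : ∀ s : Set (EuclideanSpace ℝ (Fin n)), MeasurableSet s → s ∩ D = ∅ →
      volume.restrict Em s = 0 := by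
    intro s hs hsD
    rw [hrestr, Measure.restrict_apply hs, hsD, measure_empty]
  -- truncation of f
  set fm : EuclideanSpace ℝ (Fin n) → X := fun x => if ‖f x‖ ≤ M' then f x else 0 with hfmdef
  have hfmsm : StronglyMeasurable fm :=
    StronglyMeasurable.ite (measurableSet_le hfc.norm.measurable measurable_const)
      hfc.stronglyMeasurable stronglyMeasurable_const
  have hfmb : ∀ x, ‖fm x‖ ≤ M' := by
    intro x
    rw [hfmdef]
    by_cases h : ‖f x‖ ≤ M' <;> simp [h, hM'0]
  have hfmD : ∀ x, ‖f x‖ ≤ M' → fm x = f x := fun x hx => if_pos hx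
  set g : EuclideanSpace ℝ (Fin n) → X := Em.indicator fm with hgdef
  have hgm : AEStronglyMeasurable g volume := (hfmsm.indicator hEm).aestronglyMeasurable
  have hgb : ∀ x, ‖g x‖ ≤ M' := by
    intro x
    rw [hgdef]
    by_cases h : x ∈ Em
    · rw [Set.indicator_of_mem h]; exact hfmb x
    · rw [Set.indicator_of_notMem h, norm_zero]; exact hM'0
  -- the fundamental rewriting of the Volterra operator
  have hWm : MeasurableSet {x : EuclideanSpace ℝ (Fin n) | ¬ ‖f x‖ ≤ M'} :=
    (measurableSet_le hfc.norm.measurable measurable_const).compl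
  have hWD : {x : EuclideanSpace ℝ (Fin n) | ¬ ‖f x‖ ≤ M'} ∩ D = ∅ :=
    Set.eq_empty_iff_forall_notMem.mpr fun x hx => hx.1 (hfD x hx.2)
  have hmeaseq : ∀ t : EuclideanSpace ℝ (Fin n),
      volume.restrict (It t ∩ D) = volume.restrict (It t ∩ Em) := by
    intro t
    rw [← Measure.restrict_restrict (measurableSet_It t),
      ← Measure.restrict_restrict (measurableSet_It t), hrestr]
  have hGamma : ∀ t : EuclideanSpace ℝ (Fin n),
      (∫ η in It t ∩ D, K (t - η) • f η) = ∫ η, K' (t - η) • g η := by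
    intro t
    rw [hmeaseq t]
    have step1 : (∫ η in It t ∩ Em, K (t - η) • f η) = ∫ η in It t ∩ Em, K (t - η) • fm η := by
      refine integral_congr_ae ?_
      have hW0 : volume.restrict (It t ∩ Em) {x | ¬ ‖f x‖ ≤ M'} = 0 := by
        refine le_antisymm (le_trans ?_ (hnull _ hWm hWD).le) zero_le
        exact Measure.le_iff'.mp (Measure.restrict_mono Set.inter_subset_right le_rfl) _
      have hae : ∀ᵐ x ∂(volume.restrict (It t ∩ Em)), ‖f x‖ ≤ M' := by
        rw [ae_iff]; exact hW0
      filter_upwards [hae] with x hx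
      rw [hfmD x hx]
    rw [step1, ← integral_indicator ((measurableSet_It t).inter hEm)]
    refine integral_congr_ae (Eventually.of_forall fun η => ?_)
    beta_reduce
    by_cases h1 : η ∈ It t
    · by_cases h2 : η ∈ Em
      · rw [Set.indicator_of_mem (Set.mem_inter h1 h2), hK'def,
          Set.indicator_of_mem ((mem_It_iff_vol t η).mp h1), hgdef, Set.indicator_of_mem h2]
      · rw [Set.indicator_of_notMem (fun hc => h2 hc.2), hgdef,
          Set.indicator_of_notMem h2, smul_zero]
    · rw [Set.indicator_of_notMem (fun hc => h1 hc.1), hK'def,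
        Set.indicator_of_notMem (fun hc => h1 ((mem_It_iff_vol t η).mpr hc)), zero_smul]
  -- the almost automorphic part
  set Fa : EuclideanSpace ℝ (Fin n) → X := fun t => ∫ η, K' (t - η) • fa η with hFadef
  have hFacont : Continuous Fa := cont_aux K' hK'int fa hfa.1.aestronglyMeasurable C hC
  have hGcont : Continuous fun t => ∫ η, K' (t - η) • g η :=
    cont_aux K' hK'int g hgm M' hgb
  refine ⟨Fa, fun t => (∫ η in It t ∩ D, K (t - η) • f η) - Fa t, ?_, ⟨?_, ?_⟩, fun t => by beta_reduce; abel⟩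
  · exact multiAA_aux R K' hK'm hK'int fa hfa C hC
  · -- continuity of the corrector
    have h1 : Continuous fun t => ∫ η in It t ∩ D, K (t - η) • f η := by
      simp only [hGamma]; exact hGcont
    exact h1.sub hFacont
  -- decay of the corrector
  intro ε hε
  have hS0 : (0:ℝ) ≤ S.toReal := ENNReal.toReal_nonneg
  set ε₄ := ε / (4 * (S.toReal + 1)) with hε₄def
  have hε₄ : 0 < ε₄ := by positivity
  obtain ⟨r₁, hr₁⟩ := hf₀.2 ε₄ hε₄
  set ρ := max r₁ 1 with hρdef
  have hρ0 : (0:ℝ) < ρ := lt_of_lt_of_le one_pos (le_max_right _ _)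
  set B := Metric.ball (0 : EuclideanSpace ℝ (Fin n)) ρ with hBdef
  set M₂ := M' + C with hM₂def
  have hM₂0 : (0:ℝ) ≤ M₂ := add_nonneg hM'0 hC0
  set ε₃ := ε / (4 * (M₂ + 1)) with hε₃def
  have hε₃ : 0 < ε₃ := by positivity
  obtain ⟨r₂, hr₂⟩ := hE3 ρ hρ0 ε₃ hε₃
  set ε₂ := ε / (4 * (C + 1)) with hε₂def
  have hε₂ : 0 < ε₂ := by positivity
  obtain ⟨r₃, hr₃⟩ := hE2 ε₂ hε₂
  refine ⟨max r₂ r₃, fun t htD htr => ?_⟩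
  beta_reduce
  have hb2 : ∀ x, ‖g x - fa x‖ ≤ M₂ := fun x =>
    le_trans (norm_sub_le _ _) (add_le_add (hgb x) (hC x))
  have hsm2 : AEStronglyMeasurable (fun x => g x - fa x) volume :=
    hgm.sub hfa.1.aestronglyMeasurable
  have hψint : Integrable (fun η => K' (t - η) • (g η - fa η)) volume :=
    integrable_smul_of_bound _ _ _ (hKtint t) hsm2 M₂ (Eventually.of_forall hb2)
  have hsplit0 : (∫ η in It t ∩ D, K (t - η) • f η) - Fa t
      = ∫ η, K' (t - η) • (g η - fa η) := by
    rw [hGamma t, hFadef]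
    rw [← integral_sub
      (integrable_smul_of_bound _ _ _ (hKtint t) hgm M' (Eventually.of_forall hgb))
      (integrable_smul_of_bound _ _ _ (hKtint t) hfa.1.aestronglyMeasurable C
        (Eventually.of_forall hC))]
    congr 1; funext η; rw [smul_sub]
  rw [hsplit0]
  -- three-way split of the integral
  have hsplit1 : (∫ η, K' (t - η) • (g η - fa η))
      = (∫ η in Em, K' (t - η) • (g η - fa η)) + ∫ η in Emᶜ, K' (t - η) • (g η - fa η) :=
    (integral_add_compl hEm hψint).symm
  have hsplit2 : (∫ η in Em, K' (t - η) • (g η - fa η))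
      = (∫ η, K' (t - η) • (g η - fa η) ∂((volume.restrict Em).restrict B))
        + ∫ η, K' (t - η) • (g η - fa η) ∂((volume.restrict Em).restrict Bᶜ) :=
    (integral_add_compl Metric.isOpen_ball.measurableSet (hψint.restrict)).symm
  -- piece 1 : outside the hull
  have hl1 : (∫⁻ η, ENNReal.ofReal (K' (t - η)) ∂(volume.restrict Emᶜ)) < ENNReal.ofReal ε₂ := by
    rw [hlin t, Measure.restrict_restrict (measurableSet_It t)]
    refine lt_of_le_of_lt (lintegral_mono' (Measure.restrict_mono ?_ le_rfl) le_rfl)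
      (hr₃ t htD (le_trans (le_max_right r₂ r₃) htr))
    exact Set.inter_subset_inter_right _ (Set.compl_subset_compl.mpr hDE)
  have hae1 : ∀ᵐ x ∂(volume.restrict Emᶜ), ‖g x - fa x‖ ≤ C := by
    filter_upwards [ae_restrict_mem hEm.compl] with x hx
    rw [hgdef, Set.indicator_of_notMem hx, zero_sub, norm_neg]
    exact hC x
  have hp1 : ‖∫ η in Emᶜ, K' (t - η) • (g η - fa η)‖ ≤ C * ε₂ := by
    refine le_trans (norm_integral_smul_le _ _ (hK'0t t) _ C hC0 hae1 (ne_top_of_lt hl1)) ?_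
    exact mul_le_mul_of_nonneg_left (ENNReal.toReal_lt_of_lt_ofReal hl1).le hC0
  -- piece 3 : inside the ball
  have hl3 : (∫⁻ η, ENNReal.ofReal (K' (t - η)) ∂((volume.restrict Em).restrict B))
      < ENNReal.ofReal ε₃ := by
    rw [hlin t]
    have h1 : (volume.restrict Em).restrict B = volume.restrict (B ∩ D) := by
      rw [hrestr, Measure.restrict_restrict Metric.isOpen_ball.measurableSet]
    rw [h1, Measure.restrict_restrict (measurableSet_It t)]
    rw [show It t ∩ (B ∩ D) = It t ∩ D ∩ B by
      ext x; simp only [Set.mem_inter_iff]; tauto]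
    exact hr₂ t htD (le_trans (le_max_left r₂ r₃) htr)
  have hp3 : ‖∫ η, K' (t - η) • (g η - fa η) ∂((volume.restrict Em).restrict B)‖ ≤ M₂ * ε₃ := by
    refine le_trans (norm_integral_smul_le _ _ (hK'0t t) _ M₂ hM₂0
      (Eventually.of_forall hb2) (ne_top_of_lt hl3)) ?_
    exact mul_le_mul_of_nonneg_left (ENNReal.toReal_lt_of_lt_ofReal hl3).le hM₂0
  -- piece 2 : in the hull, outside the ball
  have hν₂le : (volume.restrict Em).restrict Bᶜ ≤ volume :=
    le_trans Measure.restrict_le_self Measure.restrict_le_self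
  have hν₂leE : (volume.restrict Em).restrict Bᶜ ≤ volume.restrict Em :=
    Measure.restrict_le_self
  have hl2 : (∫⁻ η, ENNReal.ofReal (K' (t - η)) ∂((volume.restrict Em).restrict Bᶜ)) ≤ S :=
    le_trans (lintegral_mono' hν₂le le_rfl) (hKtfin t)
  have haeU : ∀ᵐ x ∂((volume.restrict Em).restrict Bᶜ), x ∉ ({x | ε₄ ≤ ‖f₀ x‖} ∩ Bᶜ) := by
    have hUm : MeasurableSet ({x : EuclideanSpace ℝ (Fin n) | ε₄ ≤ ‖f₀ x‖} ∩ Bᶜ) :=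
      ((isClosed_le continuous_const hf₀.1.norm).measurableSet).inter
        Metric.isOpen_ball.measurableSet.compl
    have hUD : ({x : EuclideanSpace ℝ (Fin n) | ε₄ ≤ ‖f₀ x‖} ∩ Bᶜ) ∩ D = ∅ := by
      refine Set.eq_empty_iff_forall_notMem.mpr fun x hx => ?_
      obtain ⟨⟨h1, h2⟩, hxD⟩ := hx
      have hxρ : ρ ≤ ‖x‖ := not_lt.mp fun hlt => h2 (mem_ball_zero_iff.mpr hlt)
      exact absurd (hr₁ x hxD (le_trans (le_max_left r₁ 1) hxρ)) (not_lt.mpr h1)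
    have h0 : ((volume.restrict Em).restrict Bᶜ) ({x | ε₄ ≤ ‖f₀ x‖} ∩ Bᶜ) = 0 :=
      le_antisymm (le_trans (Measure.le_iff'.mp hν₂leE _) (hnull _ hUm hUD).le) zero_le
    exact measure_eq_zero_iff_ae_notMem.mp h0
  have haeU₂ : ∀ᵐ x ∂((volume.restrict Em).restrict Bᶜ), ‖f x‖ ≤ M' := by
    have h0 : ((volume.restrict Em).restrict Bᶜ) {x | ¬ ‖f x‖ ≤ M'} = 0 :=
      le_antisymm (le_trans (Measure.le_iff'.mp hν₂leE _) (hnull _ hWm hWD).le) zero_le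
    rw [ae_iff]; exact h0
  have haeE : ∀ᵐ x ∂((volume.restrict Em).restrict Bᶜ), x ∈ Em :=
    (ae_restrict_mem hEm).filter_mono (ae_mono Measure.restrict_le_self)
  have haeB : ∀ᵐ x ∂((volume.restrict Em).restrict Bᶜ), x ∈ Bᶜ :=
    ae_restrict_mem Metric.isOpen_ball.measurableSet.compl
  have hae2 : ∀ᵐ x ∂((volume.restrict Em).restrict Bᶜ), ‖g x - fa x‖ ≤ ε₄ := by
    filter_upwards [haeE, haeB, haeU, haeU₂] with x h1 h2 h3 h4
    have hgx : g x = f x := by rw [hgdef, Set.indicator_of_mem h1, hfmD x h4]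
    have hf₀x : ‖f₀ x‖ < ε₄ := by
      by_contra hcon
      exact h3 ⟨not_lt.mp hcon, h2⟩
    rw [hgx, hdec x, add_sub_cancel_left]
    exact hf₀x.le
  have hp2 : ‖∫ η, K' (t - η) • (g η - fa η) ∂((volume.restrict Em).restrict Bᶜ)‖
      ≤ ε₄ * S.toReal := by
    refine le_trans (norm_integral_smul_le _ _ (hK'0t t) _ ε₄ hε₄.le hae2
      (fun hc => hSne (top_le_iff.mp (hc ▸ hl2)))) ?_
    exact mul_le_mul_of_nonneg_left (ENNReal.toReal_mono hSne hl2) hε₄.le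
  -- put the three pieces together
  rw [hsplit1, hsplit2]
  have htotal : ‖(∫ η, K' (t - η) • (g η - fa η) ∂((volume.restrict Em).restrict B))
        + (∫ η, K' (t - η) • (g η - fa η) ∂((volume.restrict Em).restrict Bᶜ))
        + ∫ η in Emᶜ, K' (t - η) • (g η - fa η)‖
      ≤ M₂ * ε₃ + ε₄ * S.toReal + C * ε₂ :=
    le_trans (norm_add₃_le) (add_le_add (add_le_add hp3 hp2) hp1)
  refine lt_of_le_of_lt htotal ?_
  have k1 : M₂ * ε₃ ≤ ε / 4 := aux_arith M₂ ε hM₂0 hε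
  have k2 : C * ε₂ ≤ ε / 4 := aux_arith C ε hC0 hε
  have k3 : ε₄ * S.toReal ≤ ε / 4 := by
    rw [mul_comm]
    calc S.toReal * ε₄ ≤ (S.toReal + 1) * ε₄ :=
          mul_le_mul_of_nonneg_right (by linarith) hε₄.le
      _ = ε / 4 := by rw [hε₄def]; exact aux_arith2 S.toReal ε hS0
  have hfin : M₂ * ε₃ + ε₄ * S.toReal + C * ε₂ ≤ ε / 4 + ε / 4 + ε / 4 := by
    exact add_le_add (add_le_add k1 k3) k2
  have h34 : ε / 4 + ε / 4 + ε / 4 < ε := by linarith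
  exact lt_of_le_of_lt hfin h34
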